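/- For every integer p ≥ 1 and every integer k ≥ 2, the real vector space H_k(ℝ^{p+1}) of harmonic homogeneous polynomials of degree k in p+1 variables has dimension C(k+p, p) − C(k+p−2, p), where C(m, j) denotes the binomial coefficient. (These are the eigenspaces of the Laplacian on the round p-sphere for the eigenvalue k(k+p−1), obtained by restriction from ℝ^{p+1}.) -/

import Mathlib

open MvPolynomial

/-- The Laplacian on polynomials in `n` variables as a linear map. -/
noncomputable def polyLaplacianLM (n : ℕ) :
    MvPolynomial (Fin n) ℝ →ₗ[ℝ] MvPolynomial (Fin n) ℝ :=
  ∑ i : Fin n, ((pderiv i : Derivation ℝ (MvPolynomial (Fin n) ℝ) _).toLinearMap ∘ₗ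
    (pderiv i : Derivation ℝ (MvPolynomial (Fin n) ℝ) _).toLinearMap)

/-- The space `H_k(ℝ^{p+1})` of harmonic homogeneous polynomials of degree `k`
in `p+1` variables. -/
noncomputable def harmonicHomogeneous (p k : ℕ) :
    Submodule ℝ (MvPolynomial (Fin (p + 1)) ℝ) :=
  homogeneousSubmodule (Fin (p + 1)) ℝ k ⊓ LinearMap.ker (polyLaplacianLM (p + 1))


namespace Harm

variable {n : ℕ}

lemma polyLaplacianLM_apply (f : MvPolynomial (Fin n) ℝ) :
    polyLaplacianLM n f = ∑ i : Fin n, pderiv i (pderiv i f) := by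
  simp [polyLaplacianLM]

lemma coeff_pderiv (i : Fin n) (m : Fin n →₀ ℕ) (f : MvPolynomial (Fin n) ℝ) :
    coeff m (pderiv i f) = ((m i : ℝ) + 1) * coeff (m + Finsupp.single i 1) f := by
  induction f using MvPolynomial.induction_on' with
  | monomial s a =>
    rw [pderiv_monomial, coeff_monomial, coeff_monomial]
    by_cases h : s i = 0
    · have h1 : s - Finsupp.single i 1 = s := by
        ext j
        by_cases hj : j = i
        · subst hj; simp [Finsupp.single_apply, h]
        · simp [Finsupp.single_apply, (Ne.symm hj : i ≠ j)]
      have h2 : s ≠ m + Finsupp.single i 1 := by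
        intro he
        apply absurd h
        simp [he, Finsupp.single_apply]
      rw [h1, if_neg h2]
      split_ifs with hs
      · subst hs; simp [h]
      · simp
    · have h2 : s - Finsupp.single i 1 = m ↔ s = m + Finsupp.single i 1 := by
        constructor
        · intro he
          ext j
          by_cases hj : j = i
          · subst hj
            have := DFunLike.congr_fun he j
            simp at this ⊢
            omega
          · have := DFunLike.congr_fun he j
            simp [Finsupp.single_apply, (Ne.symm hj : i ≠ j)] at this ⊢
            omega
        · intro he; subst he; ext j; by_cases hj : j = i
          · subst hj; simp
          · simp [Finsupp.single_apply, (Ne.symm hj : i ≠ j)]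
      split_ifs with hs hs2 hs2
      · rw [hs2] at hs ⊢
        simp
        ring
      · exact absurd (h2.1 hs) hs2
      · exact absurd (h2.2 hs2) hs
      · simp
  | add f g hf hg => simp [hf, hg]; ring

end Harm

namespace Harm

variable {n : ℕ}

/-- Product of factorials of exponents. -/
noncomputable def wfac (m : Fin n →₀ ℕ) : ℝ := ∏ j : Fin n, ((m j).factorial : ℝ)

lemma wfac_pos (m : Fin n →₀ ℕ) : 0 < wfac m :=
  Finset.prod_pos fun j _ => by exact_mod_cast (m j).factorial_pos

lemma wfac_add_single (m : Fin n →₀ ℕ) (i : Fin n) :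
    wfac (m + Finsupp.single i 1) = ((m i : ℝ) + 1) * wfac m := by
  unfold wfac
  rw [← Finset.mul_prod_erase Finset.univ _ (Finset.mem_univ i),
    ← Finset.mul_prod_erase Finset.univ (fun j => ((m j).factorial : ℝ)) (Finset.mem_univ i)]
  have h1 : ∀ j ∈ Finset.univ.erase i,
      ((((m + Finsupp.single i 1) : Fin n →₀ ℕ) j).factorial : ℝ) = ((m j).factorial : ℝ) := by
    intro j hj
    have : j ≠ i := (Finset.mem_erase.mp hj).1
    simp [Finsupp.single_apply, (Ne.symm this : i ≠ j)]
  rw [Finset.prod_congr rfl h1]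
  rw [show (((m + Finsupp.single i 1) : Fin n →₀ ℕ) i).factorial = (m i + 1).factorial by simp,
    Nat.factorial_succ]
  push_cast
  ring

/-- The apolar pairing. -/
noncomputable def bfm (f g : MvPolynomial (Fin n) ℝ) : ℝ :=
  ∑ m ∈ f.support, coeff m f * coeff m g * wfac m

lemma bfm_eq_sum {f g : MvPolynomial (Fin n) ℝ} {S : Finset (Fin n →₀ ℕ)}
    (hS : f.support ⊆ S) : bfm f g = ∑ m ∈ S, coeff m f * coeff m g * wfac m :=
  Finset.sum_subset hS (fun m _ hm => by
    rw [MvPolynomial.notMem_support_iff.mp hm]; ring)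

lemma bfm_zero_left (g : MvPolynomial (Fin n) ℝ) : bfm 0 g = 0 := by
  simp [bfm]

lemma bfm_zero_right (f : MvPolynomial (Fin n) ℝ) : bfm f 0 = 0 := by
  simp [bfm]

lemma bfm_add_left (f₁ f₂ g : MvPolynomial (Fin n) ℝ) :
    bfm (f₁ + f₂) g = bfm f₁ g + bfm f₂ g := by
  classical
  rw [bfm_eq_sum (S := f₁.support ∪ f₂.support ∪ (f₁ + f₂).support) (by
      intro m hm; exact Finset.mem_union_right _ hm),
    bfm_eq_sum (S := f₁.support ∪ f₂.support ∪ (f₁ + f₂).support) (by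
      intro m hm; exact Finset.mem_union_left _ (Finset.mem_union_left _ hm)),
    bfm_eq_sum (S := f₁.support ∪ f₂.support ∪ (f₁ + f₂).support) (by
      intro m hm; exact Finset.mem_union_left _ (Finset.mem_union_right _ hm)),
    ← Finset.sum_add_distrib]
  refine Finset.sum_congr rfl fun m _ => ?_
  rw [coeff_add]; ring

lemma bfm_add_right (f g₁ g₂ : MvPolynomial (Fin n) ℝ) :
    bfm f (g₁ + g₂) = bfm f g₁ + bfm f g₂ := by
  unfold bfm
  rw [← Finset.sum_add_distrib]
  refine Finset.sum_congr rfl fun m _ => ?_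
  rw [coeff_add]; ring

lemma bfm_sum_left {ι : Type*} (s : Finset ι) (f : ι → MvPolynomial (Fin n) ℝ)
    (g : MvPolynomial (Fin n) ℝ) : bfm (∑ i ∈ s, f i) g = ∑ i ∈ s, bfm (f i) g := by
  classical
  induction s using Finset.induction_on with
  | empty => simp [bfm_zero_left]
  | insert _ _ h ih => rw [Finset.sum_insert h, Finset.sum_insert h, bfm_add_left, ih]

lemma bfm_sum_right {ι : Type*} (s : Finset ι) (f : MvPolynomial (Fin n) ℝ)
    (g : ι → MvPolynomial (Fin n) ℝ) : bfm f (∑ i ∈ s, g i) = ∑ i ∈ s, bfm f (g i) := by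
  classical
  induction s using Finset.induction_on with
  | empty => simp [bfm_zero_right]
  | insert _ _ h ih => rw [Finset.sum_insert h, Finset.sum_insert h, bfm_add_right, ih]

lemma bfm_X_mul (i : Fin n) (f g : MvPolynomial (Fin n) ℝ) :
    bfm (X i * f) g = bfm f (pderiv i g) := by
  rw [bfm, support_X_mul, Finset.sum_map]
  refine Finset.sum_congr rfl fun m _ => ?_
  simp only [addLeftEmbedding_apply]
  rw [coeff_X_mul, add_comm (Finsupp.single i 1) m, wfac_add_single, coeff_pderiv]
  ring

lemma bfm_self_pos {f : MvPolynomial (Fin n) ℝ} (hf : f ≠ 0) : 0 < bfm f f := by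
  apply Finset.sum_pos
  · intro m hm
    have h := MvPolynomial.mem_support_iff.mp hm
    exact mul_pos (mul_self_pos.mpr h) (wfac_pos m)
  · rw [Finset.nonempty_iff_ne_empty, Ne, MvPolynomial.support_eq_empty]
    exact hf

/-- `r² = ∑ Xᵢ²`. -/
noncomputable def rsq (n : ℕ) : MvPolynomial (Fin n) ℝ := ∑ i : Fin n, X i ^ 2

lemma bfm_rsq_mul (f g : MvPolynomial (Fin n) ℝ) :
    bfm (rsq n * f) g = bfm f (polyLaplacianLM n g) := by
  rw [rsq, Finset.sum_mul, bfm_sum_left, polyLaplacianLM_apply, bfm_sum_right]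
  refine Finset.sum_congr rfl fun i _ => ?_
  rw [sq, mul_assoc, bfm_X_mul, bfm_X_mul]

end Harm

namespace Harm

variable {n : ℕ}

lemma isHomog_pderiv {f : MvPolynomial (Fin n) ℝ} {d : ℕ} (i : Fin n)
    (h : f.IsHomogeneous (d + 1)) : (pderiv i f).IsHomogeneous d := by
  intro m hm
  rw [coeff_pderiv] at hm
  have h2 : coeff (m + Finsupp.single i 1) f ≠ 0 := by
    intro h0; rw [h0, mul_zero] at hm; exact hm rfl
  have h3 := h h2
  rw [map_add] at h3
  have h4 : (Finsupp.weight 1) (Finsupp.single i (1 : ℕ)) = 1 := by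
    simp [Finsupp.weight_apply, Finsupp.sum_single_index]
  omega

lemma isHomog_rsq : (rsq n).IsHomogeneous 2 :=
  MvPolynomial.IsHomogeneous.sum _ _ _ fun i _ => isHomogeneous_X_pow i 2

lemma rsq_ne_zero (hn : 0 < n) : rsq n ≠ 0 := by
  intro h
  have := congrArg (eval (fun _ : Fin n => (1 : ℝ))) h
  rw [rsq] at this
  simp [eval_sum] at this
  omega

/-- The set of exponents of degree `k` is equivalent to `Sym (Fin n) k`. -/
lemma degree_eq_sum_id (d : Fin n →₀ ℕ) : d.degree = d.sum fun _ => id := rfl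

noncomputable def degreeEquivSym (n k : ℕ) :
    ({d : Fin n →₀ ℕ | d.degree = k} : Set _) ≃ Sym (Fin n) k where
  toFun d := ⟨Finsupp.toMultiset d.1, by
    rw [Finsupp.card_toMultiset, ← degree_eq_sum_id]; exact d.2⟩
  invFun s := ⟨Multiset.toFinsupp s.1, by
    show Finsupp.degree _ = k
    rw [degree_eq_sum_id, Multiset.toFinsupp_sum_eq]; exact s.2⟩
  left_inv d := Subtype.ext (Finsupp.toMultiset_toFinsupp d.1)
  right_inv s := Subtype.ext (Multiset.toFinsupp_toMultiset s.1)

noncomputable instance (n k : ℕ) : Fintype ({d : Fin n →₀ ℕ | d.degree = k} : Set _) :=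
  Fintype.ofEquiv _ (degreeEquivSym n k).symm

lemma finrank_homog (n k : ℕ) :
    Module.finrank ℝ (homogeneousSubmodule (Fin n) ℝ k) = (n + k - 1).choose k := by
  have he : homogeneousSubmodule (Fin n) ℝ k =
      MvPolynomial.restrictSupport ℝ {d : Fin n →₀ ℕ | d.degree = k} :=
    homogeneousSubmodule_eq_finsupp_supported (Fin n) ℝ k
  rw [he]
  have b := MvPolynomial.basisRestrictSupport ℝ {d : Fin n →₀ ℕ | d.degree = k}
  rw [Module.finrank_eq_card_basis b]
  rw [show Fintype.card {d : Fin n →₀ ℕ | d.degree = k}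
      = Fintype.card (Sym (Fin n) k) from Fintype.card_congr (degreeEquivSym n k)]
  rw [Sym.card_sym_eq_choose, Fintype.card_fin]

instance (n k : ℕ) : Module.Finite ℝ (homogeneousSubmodule (Fin n) ℝ k) := by
  rw [homogeneousSubmodule_eq_finsupp_supported (Fin n) ℝ k]
  exact Module.Finite.of_basis (MvPolynomial.basisRestrictSupport ℝ _)

end Harm

set_option synthInstance.maxHeartbeats 1000000 in
set_option maxHeartbeats 2000000 in
open Harm in
theorem dim_harmonic_homogeneous (p k : ℕ) (hp : 1 ≤ p) (hk : 2 ≤ k) :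
    Module.finrank ℝ (harmonicHomogeneous p k) =
      (k + p).choose p - (k + p - 2).choose p := by
  classical
  set n := p + 1 with hn
  set V1 := homogeneousSubmodule (Fin n) ℝ k with hV1
  set V2 := homogeneousSubmodule (Fin n) ℝ (k - 2) with hV2
  -- the Laplacian maps V1 to V2
  have hmap : ∀ x ∈ V1, polyLaplacianLM n x ∈ V2 := by
    intro x hx
    rw [mem_homogeneousSubmodule] at hx ⊢
    rw [polyLaplacianLM_apply]
    apply MvPolynomial.IsHomogeneous.sum
    intro i _
    have hx' : x.IsHomogeneous ((k - 2) + 1 + 1) := by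
      rwa [show (k - 2) + 1 + 1 = k by omega]
    exact isHomog_pderiv i (isHomog_pderiv i hx')
  set L : V1 →ₗ[ℝ] V2 := (polyLaplacianLM n).restrict hmap with hL
  -- multiplication by r² maps V2 to V1
  have hmul : ∀ x ∈ V2, (LinearMap.mulLeft ℝ (rsq n)) x ∈ V1 := by
    intro x hx
    rw [mem_homogeneousSubmodule] at hx ⊢
    have := isHomog_rsq.mul hx
    rw [show 2 + (k - 2) = k by omega] at this
    exact this
  set M : V2 →ₗ[ℝ] V1 := (LinearMap.mulLeft ℝ (rsq n)).restrict hmul with hM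
  -- L ∘ M is injective
  have hinj : Function.Injective (L ∘ₗ M) := by
    rw [← LinearMap.ker_eq_bot, LinearMap.ker_eq_bot']
    intro g hg
    by_contra hg0
    have hgv : (g : MvPolynomial (Fin n) ℝ) ≠ 0 := fun h =>
      hg0 (Subtype.ext h)
    have hrg : rsq n * (g : MvPolynomial (Fin n) ℝ) ≠ 0 :=
      mul_ne_zero (rsq_ne_zero (by omega)) hgv
    have hval : polyLaplacianLM n (rsq n * (g : MvPolynomial (Fin n) ℝ)) = 0 := by
      have := congrArg (Subtype.val) hg
      rw [LinearMap.comp_apply, LinearMap.restrict_coe_apply,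
        LinearMap.restrict_coe_apply, LinearMap.mulLeft_apply] at this
      exact this
    have h1 : bfm (rsq n * (g : MvPolynomial (Fin n) ℝ))
        (rsq n * (g : MvPolynomial (Fin n) ℝ)) = 0 := by
      rw [bfm_rsq_mul, hval, bfm_zero_right]
    exact absurd h1 (ne_of_gt (bfm_self_pos hrg))
  -- hence L ∘ M is surjective, hence L is surjective
  have hsurj : Function.Surjective L := by
    have := (LinearMap.injective_iff_surjective (f := L ∘ₗ M)).mp hinj
    intro y
    obtain ⟨x, hx⟩ := this y
    exact ⟨M x, hx⟩
  -- rank-nullity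
  have hrn := LinearMap.finrank_range_add_finrank_ker L
  rw [LinearMap.range_eq_top.mpr hsurj, finrank_top] at hrn
  -- identify the kernel of L with the harmonic homogeneous space
  have hker : LinearMap.ker L =
      Submodule.comap V1.subtype (harmonicHomogeneous p k) := by
    ext x
    constructor
    · intro h
      have hv : polyLaplacianLM n (x : MvPolynomial (Fin n) ℝ) = 0 := by
        have := congrArg Subtype.val (LinearMap.mem_ker.mp h)
        rwa [LinearMap.restrict_coe_apply] at this
      exact Submodule.mem_comap.mpr (Submodule.mem_inf.mpr
        ⟨x.2, LinearMap.mem_ker.mpr hv⟩)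
    · intro h
      obtain ⟨-, h2⟩ := Submodule.mem_inf.mp (Submodule.mem_comap.mp h)
      refine LinearMap.mem_ker.mpr (Subtype.ext ?_)
      rw [LinearMap.restrict_coe_apply]
      exact LinearMap.mem_ker.mp h2
  have hle : harmonicHomogeneous p k ≤ V1 := inf_le_left
  have hequiv := Submodule.comapSubtypeEquivOfLe hle
  have hfr : Module.finrank ℝ (harmonicHomogeneous p k)
      = Module.finrank ℝ (LinearMap.ker L) := by
    rw [hker]
    exact (LinearEquiv.finrank_eq hequiv).symm
  rw [hfr]
  have h1 : Module.finrank ℝ V1 = (k + p).choose p := by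
    rw [hV1, finrank_homog, show n + k - 1 = k + p by omega]
    have := Nat.choose_symm (Nat.le_add_right k p)
    rw [Nat.add_sub_cancel_left] at this
    exact this.symm
  have h2 : Module.finrank ℝ V2 = (k + p - 2).choose p := by
    rw [hV2, finrank_homog, show n + (k - 2) - 1 = (k - 2) + p by omega]
    have := Nat.choose_symm (Nat.le_add_right (k - 2) p)
    rw [Nat.add_sub_cancel_left] at this
    rw [show (k - 2) + p = k + p - 2 by omega] at this ⊢
    exact this.symm
  rw [h1, h2] at hrn
  omega
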